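/- An LFSA S with faulty event set E_f is not E_f-diagnosable if and only if in the concurrent composition CC(S_f, S_n) of the faulty and normal subautomata there exists a run q0' →s1' q1' →e' q2' →s2' q3' →s3' q3' such that q0' is initial, the left component of the event e' is a faulty event, and the left component of s3' has positive length. -/

import Mathlib

/-- A labeled finite-state automaton (LFSA): transition relation `δ`,
initial states `Q0`, labeling `lab` (where `none` stands for ε, i.e. unobservable). -/
structure LFSA (Q : Type*) (E : Type*) (A : Type*) where
  δ : Q → E → Q → Prop
  Q0 : Set Q
  lab : E → Option A

namespace LFSA

variable {Q Q1 Q2 E A : Type*}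

/-- A run `q →s q'` over a finite event sequence. -/
inductive Run (S : LFSA Q E A) : Q → List E → Q → Prop
  | nil (q : Q) : Run S q [] q
  | cons {q q' q'' : Q} {e : E} {s : List E} :
      S.δ q e q' → Run S q' s q'' → Run S q (e :: s) q''

/-- Output (label sequence) of an event sequence. -/
def out (S : LFSA Q E A) (s : List E) : List A := s.filterMap S.lab

/-- Generated finite language. -/
def L (S : LFSA Q E A) : Set (List E) := {s | ∃ q0 ∈ S.Q0, ∃ q, S.Run q0 s q}

/-- Current-state estimate after observing `σ`. -/
def M (S : LFSA Q E A) (σ : List A) : Set Q :=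
  {q | ∃ q0 ∈ S.Q0, ∃ s : List E, S.out s = σ ∧ S.Run q0 s q}

/-- Reachability via a nonempty event sequence. -/
def ReachPlus (S : LFSA Q E A) (q q' : Q) : Prop := ∃ s : List E, s ≠ [] ∧ S.Run q s q'

/-- There is a transition cycle reachable from `q` (a cycle at `q` itself counts). -/
def CycleReachableFrom (S : LFSA Q E A) (q : Q) : Prop :=
  ∃ p : Q, (p = q ∨ S.ReachPlus q p) ∧ ∃ s : List E, s ≠ [] ∧ S.Run p s p

/-- `*`-strong detectability. -/
def StarSD (S : LFSA Q E A) : Prop :=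
  ∃ k : ℕ, 0 < k ∧ ∀ s ∈ S.L, ∀ σ : List A, σ <+: S.out s → k < σ.length →
    ∃ q : Q, S.M σ = {q}

/-- ω-strong detectability. -/
def OmegaSD (S : LFSA Q E A) : Prop :=
  ∃ k : ℕ, 0 < k ∧ ∀ (s : ℕ → E) (ρ : ℕ → Q), ρ 0 ∈ S.Q0 →
    (∀ n : ℕ, S.δ (ρ n) (s n) (ρ (n + 1))) →
    ∀ (n : ℕ) (σ : List A), σ <+: S.out (List.ofFn (fun i : Fin n => s i)) →
      k < σ.length → ∃ q : Q, S.M σ = {q}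

/-- Concurrent composition: observable transitions with equal labels synchronize,
unobservable transitions interleave. Events are pairs over `Option E` (`none` = ε). -/
def CC (S1 : LFSA Q1 E A) (S2 : LFSA Q2 E A) :
    LFSA (Q1 × Q2) (Option E × Option E) A where
  δ p ev p' :=
    match ev with
    | (some e, some e') =>
        (∃ a : A, S1.lab e = some a ∧ S2.lab e' = some a) ∧
          S1.δ p.1 e p'.1 ∧ S2.δ p.2 e' p'.2
    | (some e, none) => S1.lab e = none ∧ S1.δ p.1 e p'.1 ∧ p.2 = p'.2
    | (none, some e') => S2.lab e' = none ∧ p.1 = p'.1 ∧ S2.δ p.2 e' p'.2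
    | (none, none) => False
  Q0 := {p | p.1 ∈ S1.Q0 ∧ p.2 ∈ S2.Q0}
  lab ev := ev.1.bind S1.lab

/-- Left projection of an event sequence of a concurrent composition. -/
def lproj (s : List (Option E × Option E)) : List E := s.filterMap Prod.fst

/-- Right projection of an event sequence of a concurrent composition. -/
def rproj (s : List (Option E × Option E)) : List E := s.filterMap Prod.snd

/-- Unobservable reach of a set of states. -/
def UR (S : LFSA Q E A) (X : Set Q) : Set Q :=
  {q | ∃ q0 ∈ X, ∃ s : List E, S.out s = [] ∧ S.Run q0 s q}

/-- One step of the observer (powerset construction). -/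
def obsStep (S : LFSA Q E A) (x : Set Q) (a : A) : Set Q :=
  {q' | ∃ q ∈ x, ∃ (e : E) (p : Q), S.lab e = some a ∧ S.δ q e p ∧ q' ∈ S.UR {p}}

/-- Observer run (deterministic). -/
def obsRun (S : LFSA Q E A) (x : Set Q) (σ : List A) : Set Q := σ.foldl S.obsStep x

/-- The concurrent composition `CC(S_ε, Obs^ε)` of `S` (with events relabeled by their
labels) and a deterministic observer with step function `ostep` and initial state `x0`:
observable transitions move both components, unobservable ones move only the left one. -/
def CCObs (S : LFSA Q E A) (ostep : Set Q → A → Set Q) (x0 : Set Q) :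
    LFSA (Q × Set Q) E A where
  δ p e p' := S.δ p.1 e p'.1 ∧
    (∀ a : A, S.lab e = some a → p'.2 = ostep p.2 a) ∧
    (S.lab e = none → p'.2 = p.2)
  Q0 := {p | p.1 ∈ S.Q0 ∧ p.2 = x0}
  lab := S.lab

/-- A state is reachable if it is an initial state or reachable from one. -/
def Reachable (S : LFSA Q E A) (q : Q) : Prop := ∃ q0 ∈ S.Q0, ∃ s : List E, S.Run q0 s q

/-- Restriction of an automaton to a set of allowed states. -/
def restrict (S : LFSA Q E A) (P : Set Q) : LFSA Q E A where
  δ q e q' := S.δ q e q' ∧ q ∈ P ∧ q' ∈ P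
  Q0 := S.Q0 ∩ P
  lab := S.lab

/-- A run all of whose states (including endpoints) lie in `P`. -/
inductive RunIn (S : LFSA Q E A) (P : Set Q) : Q → List E → Q → Prop
  | nil (q : Q) : q ∈ P → RunIn S P q [] q
  | cons {q q' q'' : Q} {e : E} {s : List E} :
      q ∈ P → S.δ q e q' → RunIn S P q' s q'' → RunIn S P q (e :: s) q''

/-- Normal subautomaton: all faulty transitions removed. -/
def Sn (S : LFSA Q E A) (Ef : Set E) : LFSA Q E A where
  δ q e q' := S.δ q e q' ∧ e ∉ Ef
  Q0 := S.Q0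
  lab := S.lab

/-- Faulty subautomaton: faulty transitions together with all their
predecessor and successor transitions. -/
def Sf (S : LFSA Q E A) (Ef : Set E) : LFSA Q E A where
  δ q e q' := S.δ q e q' ∧ ∃ c f d, f ∈ Ef ∧ S.δ c f d ∧
      ((q = c ∧ e = f ∧ q' = d) ∨ (c = q' ∨ S.ReachPlus q' c) ∨ (q = d ∨ S.ReachPlus d q))
  Q0 := S.Q0
  lab := S.lab

/-- `s` ends with a faulty event. -/
def EndsFaulty (Ef : Set E) (s : List E) : Prop := ∃ (t : List E) (e : E), e ∈ Ef ∧ s = t ++ [e]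

/-- `E_f`-diagnosability. -/
def Diag (S : LFSA Q E A) (Ef : Set E) : Prop :=
  ∃ k : ℕ, ∀ s ∈ S.L, EndsFaulty Ef s → ∀ s' : List E, s ++ s' ∈ S.L → k < s'.length →
    ∀ s'' ∈ S.L, S.out s'' = S.out (s ++ s') → ∃ e ∈ Ef, e ∈ s''

/-- `E_f`-predictability. -/
def Pred (S : LFSA Q E A) (Ef : Set E) : Prop :=
  ∃ k : ℕ, ∀ s ∈ S.L, EndsFaulty Ef s →
    ∃ s' : List E, s' <+: s ∧ (∀ e ∈ s', e ∉ Ef) ∧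
      ∀ u v : List E, u ++ v ∈ S.L → S.out s' = S.out u → (∀ e ∈ u, e ∉ Ef) →
        k < v.length → ∃ e ∈ Ef, e ∈ v

/-- Current-state opacity. -/
def CSO (S : LFSA Q E A) (QS : Set Q) : Prop :=
  ∀ q0 ∈ S.Q0, ∀ (s : List E) (q : Q), S.Run q0 s q → q ∈ QS →
    ∃ q0' ∈ S.Q0, ∃ (s' : List E) (q' : Q), S.Run q0' s' q' ∧ q' ∉ QS ∧ S.out s = S.out s'

/-- Initial-state opacity. -/
def ISO (S : LFSA Q E A) (QS : Set Q) : Prop :=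
  ∀ q0 ∈ S.Q0 ∩ QS, ∀ (s : List E) (q : Q), S.Run q0 s q →
    ∃ q0' ∈ S.Q0 \ QS, ∃ (s' : List E) (q' : Q), S.Run q0' s' q' ∧ S.out s = S.out s'

/-- Infinite-step opacity. -/
def InfSO (S : LFSA Q E A) (QS : Set Q) : Prop :=
  ∀ q0 ∈ S.Q0, ∀ (s1 : List E) (q1 : Q) (s2 : List E) (q2 : Q),
    S.Run q0 s1 q1 → S.Run q1 s2 q2 → q1 ∈ QS →
    ∃ q0' ∈ S.Q0, ∃ (s1' : List E) (q1' : Q) (s2' : List E) (q2' : Q),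
      S.Run q0' s1' q1' ∧ S.Run q1' s2' q2' ∧ q1' ∉ QS ∧
        S.out s1 = S.out s1' ∧ S.out s2 = S.out s2'

/-- `K`-step opacity. -/
def KSO (S : LFSA Q E A) (QS : Set Q) (K : ℕ) : Prop :=
  ∀ q0 ∈ S.Q0, ∀ (s1 : List E) (q1 : Q) (s2 : List E) (q2 : Q),
    S.Run q0 s1 q1 → S.Run q1 s2 q2 → q1 ∈ QS → (S.out s2).length ≤ K →
    ∃ q0' ∈ S.Q0, ∃ (s1' : List E) (q1' : Q) (s2' : List E) (q2' : Q),
      S.Run q0' s1' q1' ∧ S.Run q1' s2' q2' ∧ q1' ∉ QS ∧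
        S.out s1 = S.out s1' ∧ S.out s2 = S.out s2'

/-- Strong current-state opacity: the matching run is entirely non-secret. -/
def SCSO (S : LFSA Q E A) (QS : Set Q) : Prop :=
  ∀ q0 ∈ S.Q0, ∀ (s : List E) (q : Q), S.Run q0 s q → q ∈ QS →
    ∃ q0' ∈ S.Q0, ∃ (s' : List E) (q' : Q), S.RunIn QSᶜ q0' s' q' ∧ S.out s = S.out s'

/-- Strong initial-state opacity. -/
def SISO (S : LFSA Q E A) (QS : Set Q) : Prop :=
  ∀ q0 ∈ S.Q0 ∩ QS, ∀ (s : List E) (q : Q), S.Run q0 s q →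
    ∃ q0' ∈ S.Q0 \ QS, ∃ (s' : List E) (q' : Q), S.RunIn QSᶜ q0' s' q' ∧ S.out s = S.out s'

/-- Strong infinite-step opacity. -/
def SInfSO (S : LFSA Q E A) (QS : Set Q) : Prop :=
  ∀ q0 ∈ S.Q0, ∀ (s1 : List E) (q1 : Q) (s2 : List E) (q2 : Q),
    S.Run q0 s1 q1 → S.Run q1 s2 q2 → q1 ∈ QS →
    ∃ q0' ∈ S.Q0, ∃ (s1' : List E) (q1' : Q) (s2' : List E) (q2' : Q),
      S.RunIn QSᶜ q0' s1' q1' ∧ S.RunIn QSᶜ q1' s2' q2' ∧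
        S.out s1 = S.out s1' ∧ S.out s2 = S.out s2'

/-- Strong `K`-step opacity. -/
def SKSO (S : LFSA Q E A) (QS : Set Q) (K : ℕ) : Prop :=
  ∀ q0 ∈ S.Q0, ∀ (s1 : List E) (q1 : Q) (s2 : List E) (q2 : Q),
    S.Run q0 s1 q1 → S.Run q1 s2 q2 → q1 ∈ QS → (S.out s2).length ≤ K →
    ∃ q0' ∈ S.Q0, ∃ (s1' : List E) (q1' : Q) (s2' : List E) (q2' : Q),
      S.RunIn QSᶜ q0' s1' q1' ∧ S.RunIn QSᶜ q1' s2' q2' ∧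
        S.out s1 = S.out s1' ∧ S.out s2 = S.out s2'

/-- Observer step of the secret-deleted subautomaton `S_dss`. -/
def dssObsStep (S : LFSA Q E A) (QS : Set Q) : Set Q → A → Set Q :=
  (S.restrict QSᶜ).obsStep

/-- Initial observer state of the secret-deleted subautomaton. -/
def dssInit (S : LFSA Q E A) (QS : Set Q) : Set Q :=
  (S.restrict QSᶜ).UR (S.restrict QSᶜ).Q0

end LFSA

section Stmt5Helpers
open LFSA
variable {Q Q1 Q2 E A : Type*}

lemma run_nil_eq {S : LFSA Q E A} {q q' : Q} (h : S.Run q [] q') : q = q' := by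
  cases h; rfl

lemma run_append {S : LFSA Q E A} {q p q'' : Q} {u v : List E}
    (h1 : S.Run q u p) (h2 : S.Run p v q'') : S.Run q (u ++ v) q'' := by
  induction h1 with
  | nil => exact h2
  | cons hδ _ ih => exact Run.cons hδ (ih h2)

lemma run_split {S : LFSA Q E A} {q q'' : Q} {u v : List E}
    (h : S.Run q (u ++ v) q'') : ∃ p, S.Run q u p ∧ S.Run p v q'' := by
  induction u generalizing q with
  | nil => exact ⟨q, Run.nil q, h⟩
  | cons e t ih =>
    cases h with
    | cons hδ hr =>
      obtain ⟨p, h1, h2⟩ := ih hr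
      exact ⟨p, Run.cons hδ h1, h2⟩

lemma lproj_cons_some {e : E} {o : Option E} {w : List (Option E × Option E)} :
    lproj ((some e, o) :: w) = e :: lproj w := rfl

lemma lproj_cons_none {o : Option E} {w : List (Option E × Option E)} :
    lproj ((none, o) :: w) = lproj w := rfl

lemma rproj_cons_some {o : Option E} {e2 : E} {w : List (Option E × Option E)} :
    rproj ((o, some e2) :: w) = e2 :: rproj w := rfl

lemma rproj_cons_none {o : Option E} {w : List (Option E × Option E)} :
    rproj ((o, none) :: w) = rproj w := rfl

lemma lproj_append {w1 w2 : List (Option E × Option E)} :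
    lproj (w1 ++ w2) = lproj w1 ++ lproj w2 := List.filterMap_append

lemma rproj_append {w1 w2 : List (Option E × Option E)} :
    rproj (w1 ++ w2) = rproj w1 ++ rproj w2 := List.filterMap_append

lemma cc_run_proj {S1 : LFSA Q1 E A} {S2 : LFSA Q2 E A} {p p' : Q1 × Q2}
    {w : List (Option E × Option E)} (h : (S1.CC S2).Run p w p') :
    S1.Run p.1 (lproj w) p'.1 ∧ S2.Run p.2 (rproj w) p'.2 := by
  induction h with
  | nil => exact ⟨Run.nil _, Run.nil _⟩
  | @cons q q' q'' ev s hδ hr ih =>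
    obtain ⟨o1, o2⟩ := ev
    cases o1 with
    | none =>
      cases o2 with
      | none => exact absurd hδ id
      | some e2 =>
        obtain ⟨_, h1, h2⟩ := hδ
        refine ⟨?_, Run.cons h2 ih.2⟩
        show S1.Run q.1 (lproj s) q''.1
        rw [h1]; exact ih.1
    | some e =>
      cases o2 with
      | none =>
        obtain ⟨_, h1, h2⟩ := hδ
        refine ⟨Run.cons h1 ih.1, ?_⟩
        show S2.Run q.2 (rproj s) q''.2
        rw [h2]; exact ih.2
      | some e2 =>
        obtain ⟨_, h1, h2⟩ := hδ
        exact ⟨Run.cons h1 ih.1, Run.cons h2 ih.2⟩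

lemma cc_run_out {S1 : LFSA Q1 E A} {S2 : LFSA Q2 E A} {p p' : Q1 × Q2}
    {w : List (Option E × Option E)} (h : (S1.CC S2).Run p w p') :
    S1.out (lproj w) = S2.out (rproj w) := by
  induction h with
  | nil => rfl
  | @cons q q' q'' ev s hδ hr ih =>
    obtain ⟨o1, o2⟩ := ev
    cases o1 with
    | none =>
      cases o2 with
      | none => exact absurd hδ id
      | some e2 =>
        obtain ⟨hl, h1, h2⟩ := hδ
        show S1.out (lproj s) = S2.out (e2 :: rproj s)
        simp only [out, List.filterMap_cons, hl]; exact ih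
    | some e =>
      cases o2 with
      | none =>
        obtain ⟨hl, h1, h2⟩ := hδ
        show S1.out (e :: lproj s) = S2.out (rproj s)
        simp only [out, List.filterMap_cons, hl]; exact ih
      | some e2 =>
        obtain ⟨⟨a, ha1, ha2⟩, h1, h2⟩ := hδ
        show S1.out (e :: lproj s) = S2.out (e2 :: rproj s)
        simp only [out, List.filterMap_cons, ha1, ha2]
        rw [show List.filterMap S1.lab (lproj s) = S1.out (lproj s) from rfl, ih]; rfl

lemma cc_delta_left {S1 : LFSA Q1 E A} {S2 : LFSA Q2 E A} {p p' : Q1 × Q2}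
    {ev : Option E × Option E} {x : E} (h : (S1.CC S2).δ p ev p') (hx : ev.1 = some x) :
    S1.δ p.1 x p'.1 := by
  obtain ⟨o1, o2⟩ := ev
  cases hx
  cases o2 with
  | none => exact h.2.1
  | some e2 => exact h.2.1

lemma out_cons_none {S : LFSA Q E A} {e : E} {t : List E} (h : S.lab e = none) :
    S.out (e :: t) = S.out t := by simp only [out, List.filterMap_cons, h]

lemma out_cons_some {S : LFSA Q E A} {e : E} {t : List E} {a : A} (h : S.lab e = some a) :
    S.out (e :: t) = a :: S.out t := by simp only [out, List.filterMap_cons, h]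

lemma shuffle {S1 : LFSA Q1 E A} {S2 : LFSA Q2 E A} :
    ∀ (s1 : List E) (s2 : List E) (p1 p1' : Q1) (p2 p2' : Q2),
    S1.Run p1 s1 p1' → S2.Run p2 s2 p2' → S1.out s1 = S2.out s2 →
    ∃ w, lproj w = s1 ∧ rproj w = s2 ∧ (S1.CC S2).Run (p1, p2) w (p1', p2') := by
  intro s1
  induction s1 with
  | nil =>
    intro s2
    induction s2 with
    | nil =>
      intro p1 p1' p2 p2' h1 h2 _
      cases h1; cases h2
      exact ⟨[], rfl, rfl, Run.nil _⟩
    | cons e2 t2 ih2 =>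
      intro p1 p1' p2 p2' h1 h2 hout
      cases h2 with
      | @cons _ r _ _ _ hδ hr =>
        cases hl : S2.lab e2 with
        | some a => rw [out_cons_some hl] at hout; simp [out] at hout
        | none =>
          rw [out_cons_none hl] at hout
          obtain ⟨w, hw1, hw2, hw3⟩ := ih2 p1 p1' r p2' h1 hr hout
          refine ⟨(none, some e2) :: w, hw1, by rw [rproj_cons_some, hw2], ?_⟩
          exact Run.cons (show (S1.CC S2).δ (p1, p2) (none, some e2) (p1, r) from
            ⟨hl, rfl, hδ⟩) hw3
  | cons e1 t1 ih1 =>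
    intro s2
    induction s2 with
    | nil =>
      intro p1 p1' p2 p2' h1 h2 hout
      cases h1 with
      | @cons _ r _ _ _ hδ hr =>
        cases hl : S1.lab e1 with
        | some a => rw [out_cons_some hl] at hout; simp [out] at hout
        | none =>
          rw [out_cons_none hl] at hout
          obtain ⟨w, hw1, hw2, hw3⟩ := ih1 [] r p1' p2 p2' hr h2 hout
          refine ⟨(some e1, none) :: w, by rw [lproj_cons_some, hw1], hw2, ?_⟩
          exact Run.cons (show (S1.CC S2).δ (p1, p2) (some e1, none) (r, p2) from
            ⟨hl, hδ, rfl⟩) hw3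
    | cons e2 t2 ih2 =>
      intro p1 p1' p2 p2' h1 h2 hout
      cases hl1 : S1.lab e1 with
      | none =>
        cases h1 with
        | @cons _ r _ _ _ hδ hr =>
          rw [out_cons_none hl1] at hout
          obtain ⟨w, hw1, hw2, hw3⟩ := ih1 (e2 :: t2) r p1' p2 p2' hr h2 hout
          refine ⟨(some e1, none) :: w, by rw [lproj_cons_some, hw1], hw2, ?_⟩
          exact Run.cons (show (S1.CC S2).δ (p1, p2) (some e1, none) (_, p2) from
            ⟨hl1, hδ, rfl⟩) hw3
      | some a =>
        cases hl2 : S2.lab e2 with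
        | none =>
          cases h2 with
          | @cons _ r _ _ _ hδ hr =>
            rw [out_cons_none hl2] at hout
            obtain ⟨w, hw1, hw2, hw3⟩ := ih2 p1 p1' r p2' h1 hr hout
            refine ⟨(none, some e2) :: w, hw1, by rw [rproj_cons_some, hw2], ?_⟩
            exact Run.cons (show (S1.CC S2).δ (p1, p2) (none, some e2) (p1, r) from
              ⟨hl2, rfl, hδ⟩) hw3
        | some b =>
          cases h1 with
          | @cons _ r1 _ _ _ hδ1 hr1 =>
            cases h2 with
            | @cons _ r2 _ _ _ hδ2 hr2 =>
              rw [out_cons_some hl1, out_cons_some hl2] at hout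
              obtain ⟨hab, hout'⟩ := List.cons.injEq .. ▸ hout
              obtain ⟨w, hw1, hw2, hw3⟩ := ih1 t2 r1 p1' r2 p2' hr1 hr2 hout'
              refine ⟨(some e1, some e2) :: w,
                by rw [lproj_cons_some, hw1],
                by rw [rproj_cons_some, hw2], ?_⟩
              exact Run.cons (show (S1.CC S2).δ (p1, p2) (some e1, some e2) (r1, r2) from
                ⟨⟨a, hl1, hab ▸ hl2⟩, hδ1, hδ2⟩) hw3

lemma split_at_left {S1 : LFSA Q1 E A} {S2 : LFSA Q2 E A} :
    ∀ (w : List (Option E × Option E)) (q q'' : Q1 × Q2),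
    (S1.CC S2).Run q w q'' → ∀ (t : List E) (f : E) (r : List E), lproj w = t ++ f :: r →
    ∃ (q1 q2 : Q1 × Q2) (w1 : List (Option E × Option E)) (e : Option E × Option E)
      (w2 : List (Option E × Option E)),
      (S1.CC S2).Run q w1 q1 ∧ (S1.CC S2).δ q1 e q2 ∧ (S1.CC S2).Run q2 w2 q'' ∧
        e.1 = some f ∧ lproj w2 = r := by
  intro w
  induction w with
  | nil =>
    intro q q'' _ t f r hpr
    exact absurd hpr.symm (List.append_ne_nil_of_right_ne_nil t (List.cons_ne_nil f r))
  | cons e0 w' ih =>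
    intro q q'' hrun t f r hpr
    cases hrun with
    | @cons _ q1 _ _ _ hδ hr =>
      obtain ⟨o1, o2⟩ := e0
      cases o1 with
      | none =>
        rw [lproj_cons_none] at hpr
        obtain ⟨a1, a2, w1, e, w2, h1, h2, h3, h4, h5⟩ := ih q1 q'' hr t f r hpr
        exact ⟨a1, a2, (none, o2) :: w1, e, w2, Run.cons hδ h1, h2, h3, h4, h5⟩
      | some x =>
        rw [lproj_cons_some] at hpr
        cases t with
        | nil =>
          obtain ⟨hx, hrest⟩ := List.cons.injEq .. ▸ hpr
          exact ⟨q, q1, [], (some x, o2), w', Run.nil q, hδ, hr, by rw [hx], hrest⟩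
        | cons y t' =>
          obtain ⟨hx, hrest⟩ := List.cons.injEq .. ▸ hpr
          obtain ⟨a1, a2, w1, e, w2, h1, h2, h3, h4, h5⟩ := ih q1 q'' hr t' f r hrest
          exact ⟨a1, a2, (some x, o2) :: w1, e, w2, Run.cons hδ h1, h2, h3, h4, h5⟩

lemma lproj_ne_nil_append_right {w1 w2 : List (Option E × Option E)}
    (h : lproj w1 ≠ []) : lproj (w1 ++ w2) ≠ [] := by
  rw [lproj_append]
  exact fun hc => h (List.append_eq_nil_iff.mp hc).1

lemma cycle_of_long_run {St : Type*} [Fintype St] (T : LFSA St (Option E × Option E) A)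
    (q0 : St) :
    ∀ (w : List (Option E × Option E)) (q q'' : St), T.Run q w q'' →
    ∀ V : Finset St,
      (∀ p ∈ V, (∃ u, T.Run q0 u p) ∧ ∃ v, lproj v ≠ [] ∧ T.Run p v q) →
      (∃ u, T.Run q0 u q) →
      Fintype.card St < V.card + (lproj w).length →
      ∃ p u v, T.Run q0 u p ∧ T.Run p v p ∧ lproj v ≠ [] := by
  classical
  intro w
  induction w with
  | nil =>
    intro q q'' _ V _ _ hcard
    simp only [lproj, List.filterMap_nil, List.length_nil, Nat.add_zero] at hcard
    exact absurd hcard (not_lt.mpr (Finset.card_le_univ V))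
  | cons e0 w' ih =>
    intro q q'' hrun V hV hq hcard
    cases hrun with
    | @cons _ q1 _ _ _ hδ hr =>
      have hstep : T.Run q [e0] q1 := Run.cons hδ (Run.nil q1)
      obtain ⟨o1, o2⟩ := e0
      cases o1 with
      | none =>
        refine ih q1 q'' hr V (fun p hp => ?_) ?_ ?_
        · obtain ⟨hu, v, hv1, hv2⟩ := hV p hp
          exact ⟨hu, v ++ [(none, o2)], lproj_ne_nil_append_right hv1, run_append hv2 hstep⟩
        · obtain ⟨u, hu⟩ := hq
          exact ⟨u ++ [(none, o2)], run_append hu hstep⟩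
        · rwa [lproj_cons_none] at hcard
      | some x =>
        rw [lproj_cons_some, List.length_cons] at hcard
        by_cases hmem : q ∈ V
        · obtain ⟨hu, v, hv1, hv2⟩ := hV q hmem
          exact ⟨q, hq.choose, v, hq.choose_spec, hv2, hv1⟩
        · refine ih q1 q'' hr (insert q V) (fun p hp => ?_) ?_ ?_
          · rcases Finset.mem_insert.mp hp with h | h
            · subst h
              exact ⟨hq, [(some x, o2)], by simp [lproj_cons_some, lproj], hstep⟩
            · obtain ⟨hu, v, hv1, hv2⟩ := hV p h
              exact ⟨hu, v ++ [(some x, o2)], lproj_ne_nil_append_right hv1,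
                run_append hv2 hstep⟩
          · obtain ⟨u, hu⟩ := hq
            exact ⟨u ++ [(some x, o2)], run_append hu hstep⟩
          · rw [Finset.card_insert_of_notMem hmem]; omega

lemma sf_run_to_run {S : LFSA Q E A} {Ef : Set E} {q q' : Q} {s : List E}
    (h : (S.Sf Ef).Run q s q') : S.Run q s q' := by
  induction h with
  | nil => exact Run.nil _
  | cons hδ _ ih => exact Run.cons hδ.1 ih

lemma sn_run_to_run {S : LFSA Q E A} {Ef : Set E} {q q' : Q} {s : List E}
    (h : (S.Sn Ef).Run q s q') : S.Run q s q' := by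
  induction h with
  | nil => exact Run.nil _
  | cons hδ _ ih => exact Run.cons hδ.1 ih

lemma sn_run_no_fault {S : LFSA Q E A} {Ef : Set E} {q q' : Q} {s : List E}
    (h : (S.Sn Ef).Run q s q') : ∀ e ∈ s, e ∉ Ef := by
  induction h with
  | nil => intro e he; exact absurd he List.not_mem_nil
  | cons hδ _ ih =>
    intro e he
    rcases List.mem_cons.mp he with h | h
    · subst h; exact hδ.2
    · exact ih e h

lemma run_to_sn_run {S : LFSA Q E A} {Ef : Set E} {q q' : Q} {s : List E}
    (h : S.Run q s q') (hnf : ∀ e ∈ s, e ∉ Ef) : (S.Sn Ef).Run q s q' := by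
  induction h with
  | nil => exact Run.nil _
  | @cons _ _ _ e t hδ _ ih =>
    exact Run.cons ⟨hδ, hnf e (List.mem_cons_self)⟩
      (ih fun e' he' => hnf e' (List.mem_cons_of_mem e he'))

lemma run_reach {S : LFSA Q E A} {q q' : Q} {s : List E} (h : S.Run q s q') :
    q = q' ∨ S.ReachPlus q q' := by
  cases s with
  | nil => exact Or.inl (run_nil_eq h)
  | cons e t => exact Or.inr ⟨e :: t, List.cons_ne_nil e t, h⟩

lemma sf_lift_suffix {S : LFSA Q E A} {Ef : Set E} {c d : Q} {f : E} {qe : Q}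
    (hf : f ∈ Ef) (hcf : S.δ c f d) :
    ∀ (s : List E) (p : Q), S.Run p s qe → (p = d ∨ S.ReachPlus d p) →
      (S.Sf Ef).Run p s qe := by
  intro s p h
  induction h with
  | nil => intro _; exact Run.nil _
  | @cons q q1 _ e t hδ hr ih =>
    intro hp
    refine Run.cons ⟨hδ, c, f, d, hf, hcf, Or.inr (Or.inr hp)⟩ (ih ?_)
    refine Or.inr ?_
    rcases hp with h | ⟨u, hu1, hu2⟩
    · subst h; exact ⟨[e], List.cons_ne_nil e [], Run.cons hδ (Run.nil q1)⟩
    · exact ⟨u ++ [e], List.append_ne_nil_of_right_ne_nil u (List.cons_ne_nil e []),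
        run_append hu2 (Run.cons hδ (Run.nil q1))⟩

lemma sf_lift_prefix {S : LFSA Q E A} {Ef : Set E} {c d : Q} {f : E} {qe : Q} {s' : List E}
    (hf : f ∈ Ef) (hcf : S.δ c f d) (hsuf : S.Run d s' qe) :
    ∀ (t : List E) (q : Q), S.Run q t c → (S.Sf Ef).Run q (t ++ f :: s') qe := by
  intro t
  induction t with
  | nil =>
    intro q h
    have hq := run_nil_eq h
    subst hq
    exact Run.cons ⟨hcf, q, f, d, hf, hcf, Or.inl ⟨rfl, rfl, rfl⟩⟩
      (sf_lift_suffix hf hcf s' d hsuf (Or.inl rfl))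
  | cons e t' ih =>
    intro q h
    cases h with
    | @cons _ q1 _ _ _ hδ hr =>
      refine Run.cons ⟨hδ, c, f, d, hf, hcf, Or.inr (Or.inl ?_)⟩ (ih q1 hr)
      rcases run_reach hr with h | h
      · exact Or.inl h.symm
      · exact Or.inr h

lemma run_join_replicate {S : LFSA Q E A} {p : Q} {v : List E} (h : S.Run p v p) :
    ∀ n : ℕ, S.Run p ((List.replicate n v).flatten) p := by
  intro n
  induction n with
  | zero => exact Run.nil p
  | succ m ih =>
    rw [List.replicate_succ]
    exact run_append h (show S.Run p ((List.replicate m v).flatten) p from ih)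

lemma length_lproj_join_replicate {v : List (Option E × Option E)} (hv : lproj v ≠ []) :
    ∀ n : ℕ, n ≤ (lproj ((List.replicate n v).flatten)).length := by
  intro n
  induction n with
  | zero => exact Nat.zero_le _
  | succ m ih =>
    rw [List.replicate_succ]
    have : lproj ((v :: List.replicate m v).flatten) = lproj v ++ lproj ((List.replicate m v).flatten) := by
      rw [show (v :: List.replicate m v).flatten = v ++ (List.replicate m v).flatten from rfl, lproj_append]
    rw [this, List.length_append]
    have h1 : 1 ≤ (lproj v).length := List.length_pos_iff.mpr hv
    omega

end Stmt5Helpers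

open LFSA

/-- concurrent-composition characterization of non-diagnosability. -/
theorem stmt5 {Q E A : Type*} [Fintype Q] (S : LFSA Q E A) (Ef : Set E) :
    ¬ S.Diag Ef ↔
      ∃ q0' ∈ ((S.Sf Ef).CC (S.Sn Ef)).Q0,
        ∃ (q1' q2' q3' : Q × Q) (s1' s2' s3' : List (Option E × Option E))
          (e' : Option E × Option E),
          ((S.Sf Ef).CC (S.Sn Ef)).Run q0' s1' q1' ∧
          ((S.Sf Ef).CC (S.Sn Ef)).δ q1' e' q2' ∧
          ((S.Sf Ef).CC (S.Sn Ef)).Run q2' s2' q3' ∧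
          ((S.Sf Ef).CC (S.Sn Ef)).Run q3' s3' q3' ∧
          (∃ f ∈ Ef, e'.1 = some f) ∧ LFSA.lproj s3' ≠ [] := by
  constructor
  · -- forward: ¬Diag → witness
    intro h
    simp only [LFSA.Diag] at h
    push_neg at h
    obtain ⟨s, hsL, hEnds, s', hss', hlen, s'', hs''L, hout, hnof⟩ := h (Fintype.card (Q × Q))
    obtain ⟨t, f, hfEf, rfl⟩ := hEnds
    obtain ⟨q0, hq0, qe, hrun⟩ := hss'
    rw [show (t ++ [f]) ++ s' = t ++ f :: s' by simp] at hrun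
    obtain ⟨c, hrt, hrest⟩ := run_split hrun
    cases hrest with
    | @cons _ d _ _ _ hcf hrd =>
      have hsf : (S.Sf Ef).Run q0 (t ++ f :: s') qe :=
        sf_lift_prefix hfEf hcf hrd t q0 hrt
      obtain ⟨r0, hr0, re, hruns''⟩ := hs''L
      have hsn : (S.Sn Ef).Run r0 s'' re :=
        run_to_sn_run hruns'' (fun e he hef => hnof e hef he)
      have houteq : (S.Sf Ef).out (t ++ f :: s') = (S.Sn Ef).out s'' := by
        show S.out (t ++ f :: s') = S.out s''
        rw [← show (t ++ [f]) ++ s' = t ++ f :: s' by simp]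
        exact hout.symm
      obtain ⟨W, hWl, hWr, hWrun⟩ := shuffle (t ++ f :: s') s'' q0 qe r0 re hsf hsn houteq
      obtain ⟨q1', q2', w1, e', w2, h1, h2, h3, he1, hw2⟩ :=
        split_at_left W (q0, r0) (qe, re) hWrun t f s' hWl
      obtain ⟨p, u, v, hu, hv, hvne⟩ :=
        cycle_of_long_run ((S.Sf Ef).CC (S.Sn Ef)) q2' w2 q2' (qe, re) h3 ∅
          (fun p hp => absurd hp (Finset.notMem_empty p))
          ⟨[], LFSA.Run.nil q2'⟩
          (by rw [Finset.card_empty, Nat.zero_add, hw2]; exact hlen)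
      exact ⟨(q0, r0), ⟨hq0, hr0⟩, q1', q2', p, w1, u, v, e', h1, h2, hu, hv,
        ⟨f, hfEf, he1⟩, hvne⟩
  · -- backward: witness → ¬Diag
    rintro ⟨q0', hq0', q1', q2', q3', s1', s2', s3', e', hr1, hδ, hr2, hr3,
      ⟨f, hfEf, he1⟩, hne⟩ ⟨k, hk⟩
    set J := (List.replicate (k + 1) s3').flatten with hJ
    have hWrun : ((S.Sf Ef).CC (S.Sn Ef)).Run q0' (s1' ++ e' :: (s2' ++ J)) q3' :=
      run_append hr1 (LFSA.Run.cons hδ (run_append hr2 (run_join_replicate hr3 (k + 1))))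
    obtain ⟨hL, hR⟩ := cc_run_proj hWrun
    have hcons : lproj (e' :: (s2' ++ J)) = f :: lproj (s2' ++ J) := by
      obtain ⟨o1, o2⟩ := e'
      cases he1
      rfl
    have hWproj : lproj (s1' ++ e' :: (s2' ++ J)) =
        (lproj s1' ++ [f]) ++ lproj (s2' ++ J) := by
      rw [lproj_append, hcons]
      simp
    -- the faulty string s
    obtain ⟨hL1, _⟩ := cc_run_proj hr1
    have hδf : (S.Sf Ef).δ q1'.1 f q2'.1 := cc_delta_left hδ he1
    have hsrun : S.Run q0'.1 (lproj s1' ++ [f]) q2'.1 :=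
      run_append (sf_run_to_run hL1)
        (LFSA.Run.cons hδf.1 (LFSA.Run.nil q2'.1))
    have hq01 : q0'.1 ∈ S.Q0 := hq0'.1
    have hq02 : q0'.2 ∈ S.Q0 := hq0'.2
    have hsL : (lproj s1' ++ [f]) ∈ S.L := ⟨q0'.1, hq01, q2'.1, hsrun⟩
    have hEnds : LFSA.EndsFaulty Ef (lproj s1' ++ [f]) := ⟨lproj s1', f, hfEf, rfl⟩
    have hss'L : (lproj s1' ++ [f]) ++ lproj (s2' ++ J) ∈ S.L := by
      refine ⟨q0'.1, hq01, q3'.1, ?_⟩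
      rw [← hWproj]
      exact sf_run_to_run hL
    have hlen : k < (lproj (s2' ++ J)).length := by
      rw [lproj_append, List.length_append]
      have hlj : k + 1 ≤ (lproj J).length := by
        rw [hJ]; exact length_lproj_join_replicate hne (k + 1)
      omega
    have hs''L : rproj (s1' ++ e' :: (s2' ++ J)) ∈ S.L :=
      ⟨q0'.2, hq02, q3'.2, sn_run_to_run hR⟩
    have hout : S.out (rproj (s1' ++ e' :: (s2' ++ J))) =
        S.out ((lproj s1' ++ [f]) ++ lproj (s2' ++ J)) := by
      rw [← hWproj]
      exact (cc_run_out hWrun).symm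
    obtain ⟨e, heEf, hmem⟩ := hk (lproj s1' ++ [f]) hsL hEnds (lproj (s2' ++ J))
      hss'L hlen (rproj (s1' ++ e' :: (s2' ++ J))) hs''L hout
    exact sn_run_no_fault hR e hmem heEf
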